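/- Let k be a field of characteristic zero, let R be a finitely generated commutative k-algebra that is an integral domain of Krull dimension at most two, and let δ be a nonzero k-linear derivation of R. Suppose that R has only finitely many height-one δ-invariant prime ideals. Then the intersection of all nonzero δ-invariant prime ideals of R is nonzero. -/

import Mathlib

open Polynomial

private lemma deriv_aeval_eq {k R : Type*} [Field k] [CommRing R] [Algebra k R]
    (δ : Derivation k R R) (y : R) (p : k[X]) :
    δ (aeval y p) = aeval y (derivative p) * δ y := by
  induction p using Polynomial.induction_on' with
  | add p q hp hq => simp [hp, hq, add_mul]
  | monomial n a =>
    simp only [aeval_monomial, derivative_monomial, Derivation.leibniz,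
      Derivation.map_algebraMap, smul_eq_mul, mul_zero, zero_add,
      Derivation.leibniz_pow, map_mul, map_natCast]
    ring

private lemma maximal_invariant {k R : Type*} [Field k] [CharZero k] [CommRing R] [IsDomain R]
    [Algebra k R] [Algebra.FiniteType k R] (δ : Derivation k R R)
    (P : Ideal R) (hP : P.IsMaximal) (hinv : ∀ x ∈ P, δ x ∈ P) (y : R) : δ y ∈ P := by
  letI : Field (R ⧸ P) := Ideal.Quotient.field P
  haveI : Algebra.FiniteType k (R ⧸ P) :=
    Algebra.FiniteType.of_surjective (Ideal.Quotient.mkₐ k P)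
      (Ideal.Quotient.mkₐ_surjective k P)
  haveI : Module.Finite k (R ⧸ P) := finite_of_finite_type_of_isJacobsonRing k (R ⧸ P)
  set ybar : R ⧸ P := Ideal.Quotient.mk P y with hybar
  have hint : IsIntegral k ybar := IsIntegral.of_finite k ybar
  set p := minpoly k ybar with hpdef
  have hmk : ∀ q : k[X], Ideal.Quotient.mk P (aeval y q) = aeval ybar q := by
    intro q
    exact (aeval_algHom_apply (Ideal.Quotient.mkₐ k P) y q).symm
  have hp0 : aeval y p ∈ P := by
    rw [← Ideal.Quotient.eq_zero_iff_mem, hmk, minpoly.aeval]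
  have hd : aeval y (derivative p) * δ y ∈ P := by
    rw [← deriv_aeval_eq]; exact hinv _ hp0
  rcases hP.isPrime.mem_or_mem hd with h | h
  · exfalso
    have hne : derivative p ≠ 0 := by
      intro h0
      have h1 := natDegree_eq_zero_of_derivative_eq_zero h0
      have h2 := minpoly.natDegree_pos hint
      rw [← hpdef] at h2
      omega
    have h0 : aeval ybar (derivative p) = 0 := by
      rw [← hmk, Ideal.Quotient.eq_zero_iff_mem]; exact h
    have h1 := minpoly.degree_le_of_ne_zero k ybar hne h0
    have h2 := degree_derivative_lt (minpoly.ne_zero hint)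
    rw [← hpdef] at h1 h2
    exact absurd (h1.trans_lt h2) (lt_irrefl _)
  · exact h

theorem inf_nonzero_invariant_primes_ne_bot
    (k R : Type*) [Field k] [CharZero k] [CommRing R] [IsDomain R]
    [Algebra k R] [Algebra.FiniteType k R]
    (hdim : ringKrullDim R ≤ 2)
    (δ : Derivation k R R) (hδ : δ ≠ 0)
    (hfin : {P : Ideal R | P.IsPrime ∧ P ≠ ⊥ ∧
        (∀ Q : Ideal R, Q.IsPrime → Q < P → Q = ⊥) ∧
        ∀ x ∈ P, δ x ∈ P}.Finite) :
    sInf {P : Ideal R | P.IsPrime ∧ P ≠ ⊥ ∧ ∀ x ∈ P, δ x ∈ P} ≠ ⊥ := by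
  -- choose a nonzero element in each height-one invariant prime
  have hx : ∀ P : hfin.toFinset, ∃ b : R, b ∈ (P : Ideal R) ∧ b ≠ 0 := by
    rintro ⟨P, hP⟩
    rw [Set.Finite.mem_toFinset] at hP
    exact Submodule.exists_mem_ne_zero_of_ne_bot hP.2.1
  choose x hxmem hxne using hx
  -- a point where δ is nonzero
  have hy : ∃ y : R, δ y ≠ 0 := by
    by_contra h
    push_neg at h
    exact hδ (by ext z; simp [h z])
  obtain ⟨y, hy⟩ := hy
  set c : R := δ y * ∏ P ∈ hfin.toFinset.attach, x P with hc
  have hcne : c ≠ 0 := by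
    refine mul_ne_zero hy (Finset.prod_ne_zero_iff.mpr fun P _ => hxne P)
  intro hbot
  apply hcne
  rw [← Ideal.mem_bot, ← hbot, Submodule.mem_sInf]
  rintro P ⟨hPp, hPne, hPinv⟩
  by_cases hht : ∀ Q : Ideal R, Q.IsPrime → Q < P → Q = ⊥
  · -- height one: P is in the finite set
    have hPmem : P ∈ hfin.toFinset := by
      rw [Set.Finite.mem_toFinset]; exact ⟨hPp, hPne, hht, hPinv⟩
    have hdvd : x ⟨P, hPmem⟩ ∣ ∏ Q ∈ hfin.toFinset.attach, x Q :=
      Finset.dvd_prod_of_mem x (Finset.mem_attach _ ⟨P, hPmem⟩)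
    obtain ⟨t, ht⟩ := hdvd
    rw [hc, ht]
    exact Ideal.mul_mem_left _ _ (Ideal.mul_mem_right _ _ (hxmem ⟨P, hPmem⟩))
  · -- not height one: P is maximal
    push_neg at hht
    obtain ⟨Q, hQp, hQlt, hQne⟩ := hht
    have hPmax : Ideal.IsMaximal P := by
      by_contra hmax
      obtain ⟨M, hM, hPM⟩ := Ideal.exists_le_maximal P hPp.ne_top
      have hPMlt : P < M := lt_of_le_of_ne hPM (fun h => hmax (h ▸ hM))
      -- build a chain ⊥ < Q < P < M in PrimeSpectrum R
      have hbotQ : (⊥ : Ideal R) < Q := bot_lt_iff_ne_bot.mpr hQne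
      let p0 : PrimeSpectrum R := ⟨⊥, Ideal.bot_prime⟩
      let p1 : PrimeSpectrum R := ⟨Q, hQp⟩
      let p2 : PrimeSpectrum R := ⟨P, hPp⟩
      let p3 : PrimeSpectrum R := ⟨M, hM.isPrime⟩
      let ch : LTSeries (PrimeSpectrum R) :=
        (((RelSeries.singleton _ p0).snoc p1 (by exact hbotQ)).snoc p2
          (by exact hQlt)).snoc p3
          (by exact hPMlt)
      have hlen : ch.length = 3 := rfl
      have h3 := Order.LTSeries.length_le_krullDim ch
      rw [hlen] at h3
      have : (3 : WithBot (WithTop ℕ)) ≤ 2 := le_trans (by exact_mod_cast h3) hdim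
      norm_num at this
    have : δ y ∈ P := maximal_invariant δ P hPmax hPinv y
    exact Ideal.mul_mem_right _ _ this
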